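/- Let $\sigma$ be a permutation of $\{1, \dots, n\}$ and let $h(\sigma)$ denote the height of the binary search tree obtained by inserting $\sigma(1), \dots, \sigma(n)$ in order. Then $h(\sigma) \le \mathrm{LIS}(\sigma) + \mathrm{LDS}(\sigma)$, where $\mathrm{LIS}(\sigma)$ and $\mathrm{LDS}(\sigma)$ denote the maximal lengths of increasing and decreasing subsequences of $\sigma$ respectively. -/

import Mathlib

/-- Binary trees with real labels. -/
inductive BTree where
  | leaf : BTree
  | node : BTree → ℝ → BTree → BTree

namespace BTree

/-- Insertion of a value into a binary search tree. -/
noncomputable def insert (x : ℝ) : BTree → BTree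
  | leaf => node leaf x leaf
  | node l y r => if x < y then node (insert x l) y r else node l y (insert x r)

/-- Number of nodes. -/
def size : BTree → ℕ
  | leaf => 0
  | node l _ r => size l + 1 + size r

/-- Number of nodes on a longest root-to-leaf path. -/
def depth : BTree → ℕ
  | leaf => 0
  | node l _ r => 1 + max (depth l) (depth r)

/-- Height: maximal number of edges from the root to a leaf (`-1` for the empty tree). -/
def height (t : BTree) : ℤ := (depth t : ℤ) - 1

/-- The value `x` is a label of the tree. -/
def Mem (x : ℝ) : BTree → Prop
  | leaf => False
  | node l y r => x = y ∨ Mem x l ∨ Mem x r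

/-- The node labeled `a` is a (strict) ancestor of the node labeled `b`. -/
def IsAncestor (a b : ℝ) : BTree → Prop
  | leaf => False
  | node l y r => (a = y ∧ (Mem b l ∨ Mem b r)) ∨ IsAncestor a b l ∨ IsAncestor a b r

/-- A set of labels is a chain if any two of its nodes are comparable for the
ancestor relation. -/
def IsChain (t : BTree) (C : Set ℝ) : Prop :=
  ∀ a ∈ C, ∀ b ∈ C, a = b ∨ IsAncestor a b t ∨ IsAncestor b a t

end BTree

/-- The binary search tree obtained by inserting the elements of a list in order. -/
noncomputable def bstOfList (l : List ℝ) : BTree := l.foldl (fun t x => t.insert x) .leaf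

/-- The BST of a list of planar points, already sorted by increasing `x`-coordinate:
insert the `y`-coordinates in order. -/
noncomputable def bstOfSortedPts (l : List (ℝ × ℝ)) : BTree := bstOfList (l.map Prod.snd)

open scoped Classical in
/-- The BST of a finite set of planar points, given as a list: sort the points by
increasing `x`-coordinate and insert the `y`-coordinates in this order. -/
noncomputable def bstOfPts (l : List (ℝ × ℝ)) : BTree :=
  bstOfSortedPts (l.mergeSort (fun p q => decide (p.1 ≤ q.1)))

open scoped Classical in
/-- Length of a longest increasing subsequence of `f`. -/
noncomputable def lisLen {n : ℕ} {β : Type*} [Preorder β] (f : Fin n → β) : ℕ :=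
  Finset.univ.sup fun s : Finset (Fin n) => if StrictMonoOn f ↑s then s.card else 0

open scoped Classical in
/-- Length of a longest decreasing subsequence of `f`. -/
noncomputable def ldsLen {n : ℕ} {β : Type*} [Preorder β] (f : Fin n → β) : ℕ :=
  Finset.univ.sup fun s : Finset (Fin n) => if StrictAntiOn f ↑s then s.card else 0

open scoped List

lemma foldl_insert_node (x : ℝ) : ∀ (l : List ℝ) (L R : BTree),
    l.foldl (fun t v => t.insert v) (BTree.node L x R) =
      BTree.node ((l.filter (fun y => decide (y < x))).foldl (fun t v => t.insert v) L) x
        ((l.filter (fun y => decide (¬ y < x))).foldl (fun t v => t.insert v) R)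
  | [], L, R => by simp
  | y :: l, L, R => by
    have hins : BTree.insert y (BTree.node L x R) =
        if y < x then BTree.node (BTree.insert y L) x R
        else BTree.node L x (BTree.insert y R) := rfl
    by_cases h : y < x
    · simp [List.foldl_cons, List.filter_cons, hins, h, foldl_insert_node x l]
    · have h' : x ≤ y := le_of_not_gt h
      simp [List.foldl_cons, List.filter_cons, hins, h, h', foldl_insert_node x l]

lemma bstOfList_cons (x : ℝ) (l : List ℝ) :
    bstOfList (x :: l) = BTree.node (bstOfList (l.filter (fun y => decide (y < x)))) x
      (bstOfList (l.filter (fun y => decide (¬ y < x)))) := by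
  unfold bstOfList
  rw [List.foldl_cons]
  have : BTree.insert x BTree.leaf = BTree.node .leaf x .leaf := rfl
  show (l.foldl (fun t v => t.insert v) (BTree.insert x .leaf)) = _
  rw [this]
  exact foldl_insert_node x l .leaf .leaf

lemma depth_le_of_bounds : ∀ (N : ℕ) (l : List ℝ), l.length ≤ N → l.Nodup →
    ∀ (A B : ℕ),
    (∀ s, s <+ l → s.Chain' (· < ·) → s.length ≤ A) →
    (∀ s, s <+ l → s.Chain' (· > ·) → s.length ≤ B) →
    (bstOfList l).depth ≤ A + B := by
  intro N
  induction N with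
  | zero =>
    intro l hl _ A B _ _
    have : l = [] := List.eq_nil_of_length_eq_zero (Nat.le_zero.mp hl)
    subst this
    simp [bstOfList, BTree.depth]
  | succ N ih =>
    intro l hl hnd A B hA hB
    match l with
    | [] => simp [bstOfList, BTree.depth]
    | x :: l =>
      rw [bstOfList_cons]
      have hA1 : 1 ≤ A := hA [x] (by simp) (List.isChain_singleton x)
      have hB1 : 1 ≤ B := hB [x] (by simp) (List.isChain_singleton x)
      obtain ⟨hxl, hndl⟩ := List.nodup_cons.mp hnd
      have hlen : l.length ≤ N := by simpa using hl
      have hfl : l.filter (fun y => decide (y < x)) <+ l := List.filter_sublist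
      have hfr : l.filter (fun y => decide (¬ y < x)) <+ l := List.filter_sublist
      -- left subtree
      have dl : (bstOfList (l.filter (fun y => decide (y < x)))).depth ≤ A + (B - 1) := by
        refine ih _ (le_trans hfl.length_le hlen) (hndl.sublist hfl) A (B - 1) ?_ ?_
        · intro s hs hc
          exact hA s ((hs.trans hfl).trans (List.sublist_cons_self x l)) hc
        · intro s hs hc
          have hmem : ∀ y ∈ s, y < x := by
            intro y hy
            have := hs.subset hy
            simpa using (List.mem_filter.mp this).2
          have hchain : (x :: s).Chain' (· > ·) := by
            apply List.isChain_cons.mpr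
            refine ⟨?_, hc⟩
            intro y hy
            exact hmem y (List.mem_of_mem_head? hy)
          have := hB (x :: s) (List.Sublist.cons₂ x (hs.trans hfl)) hchain
          simp only [List.length_cons] at this
          omega
      -- right subtree
      have dr : (bstOfList (l.filter (fun y => decide (¬ y < x)))).depth ≤ (A - 1) + B := by
        refine ih _ (le_trans hfr.length_le hlen) (hndl.sublist hfr) (A - 1) B ?_ ?_
        · intro s hs hc
          have hmem : ∀ y ∈ s, x < y := by
            intro y hy
            have hyl : y ∈ l := hfr.subset (hs.subset hy)
            have : ¬ y < x := by simpa using (List.mem_filter.mp (hs.subset hy)).2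
            have hne : y ≠ x := fun h => hxl (h ▸ hyl)
            exact lt_of_le_of_ne (not_lt.mp this) (Ne.symm hne)
          have hchain : (x :: s).Chain' (· < ·) := by
            apply List.isChain_cons.mpr
            refine ⟨?_, hc⟩
            intro y hy
            exact hmem y (List.mem_of_mem_head? hy)
          have := hA (x :: s) (List.Sublist.cons₂ x (hs.trans hfr)) hchain
          simp only [List.length_cons] at this
          omega
        · intro s hs hc
          exact hB s ((hs.trans hfr).trans (List.sublist_cons_self x l)) hc
      set d1 := (bstOfList (l.filter (fun y => decide (y < x)))).depth with hd1
      set d2 := (bstOfList (l.filter (fun y => decide (¬ y < x)))).depth with hd2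
      show 1 + max d1 d2 ≤ A + B
      have hmax : max d1 d2 ≤ A + B - 1 := max_le (by omega) (by omega)
      omega

open scoped Classical in
lemma chain_le_lisLen {n : ℕ} (f : Fin n → ℝ) (s : List ℝ)
    (hs : s <+ List.ofFn f) (hc : s.Chain' (· < ·)) : s.length ≤ lisLen f := by
  obtain ⟨e, he⟩ := List.sublist_iff_exists_fin_orderEmbedding_get_eq.mp hs
  set g : Fin s.length → Fin n := fun ix => Fin.cast (List.length_ofFn (f := f)) (e ix) with hg
  have hgval : ∀ ix, f (g ix) = s.get ix := by
    intro ix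
    have := he ix
    rw [List.get_ofFn] at this
    exact this.symm
  have hgmono : StrictMono g := fun a b hab =>
    Fin.lt_def.mpr (Fin.lt_def.mp (e.strictMono hab))
  have hpw : s.Pairwise (· < ·) := List.isChain_iff_pairwise.mp hc
  have hget : ∀ p q : Fin s.length, p < q → s.get p < s.get q := by
    intro p q hpq
    exact List.pairwise_iff_get.mp hpw p q hpq
  set F : Finset (Fin n) := Finset.image g Finset.univ with hF
  have hcard : F.card = s.length := by
    rw [hF, Finset.card_image_of_injective _ hgmono.injective, Finset.card_univ,
      Fintype.card_fin]
  have hmono : StrictMonoOn f ↑F := by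
    intro a ha b hb hab
    simp only [hF, Finset.coe_image, Set.mem_image] at ha hb
    obtain ⟨p, -, rfl⟩ := ha
    obtain ⟨q, -, rfl⟩ := hb
    have hpq : p < q := by
      rcases lt_trichotomy p q with h | h | h
      · exact h
      · exact absurd (h ▸ rfl) (ne_of_lt hab)
      · exact absurd (hgmono h) (not_lt.mpr (le_of_lt hab))
    rw [hgval p, hgval q]
    exact hget p q hpq
  calc s.length = (if StrictMonoOn f ↑F then F.card else 0) := by rw [if_pos hmono, hcard]
    _ ≤ lisLen f := by
      unfold lisLen
      exact Finset.le_sup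
        (f := fun t : Finset (Fin n) => if StrictMonoOn f ↑t then t.card else 0)
        (Finset.mem_univ F)

open scoped Classical in
lemma chain_le_ldsLen {n : ℕ} (f : Fin n → ℝ) (s : List ℝ)
    (hs : s <+ List.ofFn f) (hc : s.Chain' (· > ·)) : s.length ≤ ldsLen f := by
  obtain ⟨e, he⟩ := List.sublist_iff_exists_fin_orderEmbedding_get_eq.mp hs
  set g : Fin s.length → Fin n := fun ix => Fin.cast (List.length_ofFn (f := f)) (e ix) with hg
  have hgval : ∀ ix, f (g ix) = s.get ix := by
    intro ix
    have := he ix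
    rw [List.get_ofFn] at this
    exact this.symm
  have hgmono : StrictMono g := fun a b hab =>
    Fin.lt_def.mpr (Fin.lt_def.mp (e.strictMono hab))
  have hpw : s.Pairwise (· > ·) := List.isChain_iff_pairwise.mp hc
  have hget : ∀ p q : Fin s.length, p < q → s.get q < s.get p := by
    intro p q hpq
    exact List.pairwise_iff_get.mp hpw p q hpq
  set F : Finset (Fin n) := Finset.image g Finset.univ with hF
  have hcard : F.card = s.length := by
    rw [hF, Finset.card_image_of_injective _ hgmono.injective, Finset.card_univ,
      Fintype.card_fin]
  have hanti : StrictAntiOn f ↑F := by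
    intro a ha b hb hab
    simp only [hF, Finset.coe_image, Set.mem_image] at ha hb
    obtain ⟨p, -, rfl⟩ := ha
    obtain ⟨q, -, rfl⟩ := hb
    have hpq : p < q := by
      rcases lt_trichotomy p q with h | h | h
      · exact h
      · exact absurd (h ▸ rfl) (ne_of_lt hab)
      · exact absurd (hgmono h) (not_lt.mpr (le_of_lt hab))
    rw [hgval p, hgval q]
    exact hget p q hpq
  calc s.length = (if StrictAntiOn f ↑F then F.card else 0) := by rw [if_pos hanti, hcard]
    _ ≤ ldsLen f := by
      unfold ldsLen
      exact Finset.le_sup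
        (f := fun t : Finset (Fin n) => if StrictAntiOn f ↑t then t.card else 0)
        (Finset.mem_univ F)

open scoped Classical in
lemma lisLen_cast {n : ℕ} (σ : Equiv.Perm (Fin n)) :
    lisLen (fun i => ((σ i : ℕ) : ℝ)) = lisLen (fun i => σ i) := by
  unfold lisLen
  apply Finset.sup_congr rfl
  intro s _
  congr 1
  · apply propext
    constructor
    · intro h a ha b hb hab
      have h2 : ((σ a : ℕ) : ℝ) < ((σ b : ℕ) : ℝ) := h ha hb hab
      exact Fin.lt_def.mpr (by exact_mod_cast h2)
    · intro h a ha b hb hab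
      have h2 : σ a < σ b := h ha hb hab
      show ((σ a : ℕ) : ℝ) < ((σ b : ℕ) : ℝ)
      exact_mod_cast Fin.lt_def.mp h2

open scoped Classical in
lemma ldsLen_cast {n : ℕ} (σ : Equiv.Perm (Fin n)) :
    ldsLen (fun i => ((σ i : ℕ) : ℝ)) = ldsLen (fun i => σ i) := by
  unfold ldsLen
  apply Finset.sup_congr rfl
  intro s _
  congr 1
  · apply propext
    constructor
    · intro h a ha b hb hab
      have h2 : ((σ b : ℕ) : ℝ) < ((σ a : ℕ) : ℝ) := h ha hb hab
      exact Fin.lt_def.mpr (by exact_mod_cast h2)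
    · intro h a ha b hb hab
      have h2 : σ b < σ a := h ha hb hab
      show ((σ b : ℕ) : ℝ) < ((σ a : ℕ) : ℝ)
      exact_mod_cast Fin.lt_def.mp h2

/-- **The BST height is at most `LIS + LDS`.** For a permutation `σ` of `{1,…,n}`, the
height of the binary search tree obtained by inserting `σ 1, …, σ n` in order is at most
the sum of the lengths of a longest increasing and a longest decreasing subsequence. -/
theorem stmt7 {n : ℕ} (σ : Equiv.Perm (Fin n)) :
    (bstOfList (List.ofFn (fun i => ((σ i : ℕ) : ℝ)))).height
      ≤ (lisLen (fun i => σ i) : ℤ) + (ldsLen (fun i => σ i) : ℤ) := by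
  set f : Fin n → ℝ := fun i => ((σ i : ℕ) : ℝ) with hf
  have hinj : Function.Injective f := by
    intro a b hab
    apply σ.injective
    have : ((σ a : ℕ) : ℝ) = ((σ b : ℕ) : ℝ) := hab
    exact Fin.val_injective (Nat.cast_injective this)
  have hnd : (List.ofFn f).Nodup := List.nodup_ofFn.mpr hinj
  have key : (bstOfList (List.ofFn f)).depth ≤ lisLen f + ldsLen f := by
    refine depth_le_of_bounds (List.ofFn f).length _ le_rfl hnd _ _ ?_ ?_
    · intro s hs hc; exact chain_le_lisLen f s hs hc
    · intro s hs hc; exact chain_le_ldsLen f s hs hc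
  rw [lisLen_cast σ, ldsLen_cast σ] at key
  unfold BTree.height
  have : ((bstOfList (List.ofFn f)).depth : ℤ) ≤
      (lisLen (fun i => σ i) : ℤ) + (ldsLen (fun i => σ i) : ℤ) := by
    exact_mod_cast key
  omega
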